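/- With the hypotheses above and q (the order of τ) odd, the short exact sequence 1 → A_n(σ) → B_n(σ) → S_n → 1 splits: there exists a group homomorphism ρ: S_n → B_n(σ) whose composition with the projection B_n(σ) → B_n(σ)/A_n(σ) ≅ S_n is the identity. Concretely, ρ can be defined by sending the transposition (s,s+1) to σ_s·ω^{(s-1)d}(a) where a = τ^k·ω^d(τ^ℓ) with k+ℓ ≡ -1 (mod q). -/

import Mathlib

def shift (d : ℕ) (σ : Equiv.Perm ℕ) : Equiv.Perm ℕ where
  toFun k := if k < d then k else σ (k - d) + d
  invFun k := if k < d then k else σ⁻¹ (k - d) + d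
  left_inv k := by
    by_cases h : k < d
    · simp [h]
    · dsimp only
      rw [if_neg h, if_neg (by omega), Nat.add_sub_cancel, Equiv.Perm.inv_def, Equiv.symm_apply_apply]
      omega
  right_inv k := by
    by_cases h : k < d
    · simp [h]
    · dsimp only
      rw [if_neg h, if_neg (by omega), Nat.add_sub_cancel, Equiv.Perm.inv_def, Equiv.apply_symm_apply]
      omega

def theta (d : ℕ) : Equiv.Perm ℕ :=
  Function.Involutive.toPerm
    (fun k => if k < d then k + d else if k < 2 * d then k - d else k)
    (by intro k; dsimp only; split_ifs <;> omega)

namespace Aux16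

open Equiv

lemma fix_lt {c : ℕ} {w : Equiv.Perm ℕ} (hw : ∀ m, c ≤ m → w m = m) {x : ℕ} (hx : x < c) :
    w x < c := by
  by_contra h
  push_neg at h
  have := hw _ h
  have := w.injective (this.trans rfl : w (w x) = w x)
  omega

lemma fix_inv {c : ℕ} {w : Equiv.Perm ℕ} (hw : ∀ m, c ≤ m → w m = m) :
    ∀ m, c ≤ m → w⁻¹ m = m := by
  intro m hm
  have : w (w⁻¹ m) = w m := by rw [show w (w⁻¹ m) = m from w.apply_symm_apply m, hw m hm]
  exact w.injective this

/-- Subgroup of permutations fixing everything `≥ c`. -/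
def Fx (c : ℕ) : Subgroup (Equiv.Perm ℕ) where
  carrier := {g | ∀ m, c ≤ m → g m = m}
  one_mem' := fun m _ => rfl
  mul_mem' {a b} ha hb := fun m hm => by
    simp only [Equiv.Perm.mul_apply, hb m hm, ha m hm]
  inv_mem' {g} hg := fix_inv hg

lemma Fx_prop {c : ℕ} {w : Equiv.Perm ℕ} (h : w ∈ Fx c) : ∀ m, c ≤ m → w m = m := h

lemma theta_apply (d x : ℕ) :
    theta d x = if x < d then x + d else if x < 2 * d then x - d else x := rfl

lemma shift_apply_lt (d : ℕ) (g : Equiv.Perm ℕ) {y : ℕ} (h : y < d) : shift d g y = y := by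
  simp [shift, h]

lemma shift_apply_ge (d : ℕ) (g : Equiv.Perm ℕ) {y : ℕ} (h : d ≤ y) :
    shift d g y = g (y - d) + d := by
  simp [shift, Nat.not_lt.mpr h]

lemma shift_mul (d : ℕ) (a b : Equiv.Perm ℕ) : shift d (a * b) = shift d a * shift d b := by
  ext y
  by_cases h : y < d
  · rw [Equiv.Perm.mul_apply, shift_apply_lt d _ h, shift_apply_lt d _ h, shift_apply_lt d _ h]
  · push_neg at h
    rw [Equiv.Perm.mul_apply, shift_apply_ge d _ h, shift_apply_ge d _ h,
      shift_apply_ge d _ (by omega : d ≤ b (y - d) + d), Nat.add_sub_cancel,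
      Equiv.Perm.mul_apply]

/-- `shift d` as a monoid hom. -/
def shiftHom (d : ℕ) : Equiv.Perm ℕ →* Equiv.Perm ℕ := MonoidHom.mk' (shift d) (shift_mul d)

lemma shift_pow (d : ℕ) (g : Equiv.Perm ℕ) (k : ℕ) : shift d (g ^ k) = (shift d g) ^ k :=
  map_pow (shiftHom d) g k

lemma shift_zpow (d : ℕ) (g : Equiv.Perm ℕ) (k : ℤ) : shift d (g ^ k) = (shift d g) ^ k :=
  map_zpow (shiftHom d) g k

lemma shift_shift (a b : ℕ) (g : Equiv.Perm ℕ) : shift a (shift b g) = shift (a + b) g := by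
  ext y
  by_cases h : y < a
  · rw [shift_apply_lt _ _ h, shift_apply_lt _ _ (by omega)]
  · push_neg at h
    by_cases h2 : y < a + b
    · rw [shift_apply_ge _ _ h, shift_apply_lt _ _ (by omega : y - a < b),
        shift_apply_lt _ _ h2]
      omega
    · push_neg at h2
      rw [shift_apply_ge _ _ h, shift_apply_ge _ _ (by omega : b ≤ y - a),
        shift_apply_ge _ _ h2]
      have : y - a - b = y - (a + b) := by omega
      rw [this]
      omega

lemma div_helper {d : ℕ} (hd : 0 < d) (a t : ℕ) (ht : t < d) : (d * a + t) / d = a := by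
  rw [Nat.mul_add_div hd, Nat.div_eq_of_lt ht]; omega

lemma mod_helper {d : ℕ} (hd : 0 < d) (a t : ℕ) (ht : t < d) : (d * a + t) % d = t := by
  rw [Nat.mul_add_mod, Nat.mod_eq_of_lt ht]


lemma blk_inv {d : ℕ} (hd : 0 < d) {g : Equiv.Perm ℕ}
    (hg : ∀ i j, i / d = j / d → g i / d = g j / d) :
    ∀ i j, i / d = j / d → g⁻¹ i / d = g⁻¹ j / d := by
  intro i j hij
  by_contra hne
  set base : Fin d ⊕ Fin d → ℕ := Sum.elim (fun x : Fin d => d * (g⁻¹ i / d) + (x : ℕ))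
      (fun x : Fin d => d * (g⁻¹ j / d) + (x : ℕ)) with hbase
  have key : ∀ (a : ℕ) (x : Fin d), g (d * (g⁻¹ a / d) + (x : ℕ)) / d = a / d := by
    intro a x
    have h1 : (d * (g⁻¹ a / d) + (x : ℕ)) / d = g⁻¹ a / d := div_helper hd _ _ x.isLt
    have h2 := hg (d * (g⁻¹ a / d) + (x : ℕ)) (g⁻¹ a) (by rw [h1])
    rwa [show ∀ x, g (g⁻¹ x) = x from g.apply_symm_apply] at h2
  have hdiv : ∀ z, g (base z) / d = i / d := by
    rintro (x | x)
    · exact key i x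
    · show g (d * (g⁻¹ j / d) + (x : ℕ)) / d = i / d
      rw [key j x]; omega
  set F : Fin d ⊕ Fin d → Fin d := fun z => ⟨g (base z) % d, Nat.mod_lt _ hd⟩ with hF
  have hinj : Function.Injective F := by
    intro z w h
    have hmod : g (base z) % d = g (base w) % d := congrArg Fin.val h
    have heq : g (base z) = g (base w) := by
      conv_lhs => rw [← Nat.div_add_mod (g (base z)) d]
      conv_rhs => rw [← Nat.div_add_mod (g (base w)) d]
      rw [hdiv z, hdiv w, hmod]
    have harg := g.injective heq
    rcases z with x | x <;> rcases w with y | y <;>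
      simp only [hbase, Sum.elim_inl, Sum.elim_inr] at harg
    · congr 1; exact Fin.ext (by omega)
    · exfalso
      have h2 : (d * (g⁻¹ i / d) + (x : ℕ)) / d = (d * (g⁻¹ j / d) + (y : ℕ)) / d := by
        rw [harg]
      rw [div_helper hd _ _ x.isLt, div_helper hd _ _ y.isLt] at h2
      exact hne (by rw [h2])
    · exfalso
      have h2 : (d * (g⁻¹ j / d) + (x : ℕ)) / d = (d * (g⁻¹ i / d) + (y : ℕ)) / d := by
        rw [harg]
      rw [div_helper hd _ _ x.isLt, div_helper hd _ _ y.isLt] at h2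
      exact hne (by rw [h2])
    · congr 1; exact Fin.ext (by omega)
  have := Fintype.card_le_of_injective F hinj
  simp at this
  omega

/-- The subgroup of permutations compatible with the block structure and fixing `≥ n*d`. -/
def Pgrp (d n : ℕ) (hd : 0 < d) : Subgroup (Equiv.Perm ℕ) where
  carrier := {g | (∀ i j, i / d = j / d → g i / d = g j / d) ∧ ∀ i, n * d ≤ i → g i = i}
  one_mem' := ⟨fun i j h => h, fun i _ => rfl⟩
  mul_mem' {a b} ha hb := by
    refine ⟨fun i j h => ha.1 _ _ (hb.1 _ _ h), fun i h => ?_⟩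
    rw [Equiv.Perm.mul_apply, hb.2 i h, ha.2 i h]
  inv_mem' {g} hg := ⟨blk_inv hd hg.1, fix_inv hg.2⟩

lemma Pgrp_lt {d n : ℕ} {hd : 0 < d} {g : Equiv.Perm ℕ} (hg : g ∈ Pgrp d n hd) {i : ℕ}
    (hi : i < n * d) : g i < n * d :=
  fix_lt hg.2 hi

lemma Pgrp_div_lt {d n : ℕ} {hd : 0 < d} {g : Equiv.Perm ℕ} (hg : g ∈ Pgrp d n hd) {k : ℕ}
    (hk : k < n) : g (k * d) / d < n := by
  have h1 : k * d < n * d := by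
    exact (Nat.mul_lt_mul_right hd).mpr hk
  have := Pgrp_lt hg h1
  rw [Nat.div_lt_iff_lt_mul hd]
  omega

/-- The induced permutation on blocks. -/
def blkPerm (d n : ℕ) (hd : 0 < d) (g : ↥(Pgrp d n hd)) : Equiv.Perm (Fin n) where
  toFun k := ⟨(g : Equiv.Perm ℕ) (k * d) / d, Pgrp_div_lt g.2 k.isLt⟩
  invFun k := ⟨((g : Equiv.Perm ℕ))⁻¹ (k * d) / d, Pgrp_div_lt ((Pgrp d n hd).inv_mem g.2) k.isLt⟩
  left_inv k := by
    apply Fin.ext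
    dsimp only
    have hc := blk_inv hd g.2.1
    have h1 : ((g : Equiv.Perm ℕ) ((k : ℕ) * d) / d * d) / d = (g : Equiv.Perm ℕ) ((k : ℕ) * d) / d :=
      Nat.mul_div_cancel _ hd
    rw [hc _ _ h1, show ∀ x, ((g : Equiv.Perm ℕ))⁻¹ ((g : Equiv.Perm ℕ) x) = x from (g : Equiv.Perm ℕ).symm_apply_apply, Nat.mul_div_cancel _ hd]
  right_inv k := by
    apply Fin.ext
    dsimp only
    have hc := g.2.1
    have h1 : (((g : Equiv.Perm ℕ))⁻¹ ((k : ℕ) * d) / d * d) / d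
        = ((g : Equiv.Perm ℕ))⁻¹ ((k : ℕ) * d) / d := Nat.mul_div_cancel _ hd
    rw [hc _ _ h1, show ∀ x, (g : Equiv.Perm ℕ) (((g : Equiv.Perm ℕ))⁻¹ x) = x from (g : Equiv.Perm ℕ).apply_symm_apply, Nat.mul_div_cancel _ hd]

/-- The block-permutation homomorphism. -/
def Phi (d n : ℕ) (hd : 0 < d) : ↥(Pgrp d n hd) →* Equiv.Perm (Fin n) :=
  MonoidHom.mk' (blkPerm d n hd) (by
    intro a b
    ext k
    show ((a : Equiv.Perm ℕ) * (b : Equiv.Perm ℕ)) ((k : ℕ) * d) / d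
      = (a : Equiv.Perm ℕ) ((b : Equiv.Perm ℕ) ((k : ℕ) * d) / d * d) / d
    rw [Equiv.Perm.mul_apply]
    exact a.2.1 _ _ (Nat.mul_div_cancel _ hd).symm)

lemma Phi_apply {d n : ℕ} (hd : 0 < d) (g : ↥(Pgrp d n hd)) (k : Fin n) :
    ((Phi d n hd g k : Fin n) : ℕ) = (g : Equiv.Perm ℕ) ((k : ℕ) * d) / d := rfl

lemma Phi_eq_one_of {d n : ℕ} (hd : 0 < d) (g : ↥(Pgrp d n hd))
    (h : ∀ y, (g : Equiv.Perm ℕ) y / d = y / d) : Phi d n hd g = 1 := by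
  ext k
  rw [Phi_apply hd g k, h, Nat.mul_div_cancel _ hd]
  rfl

/-- Extension of a permutation of `Fin n` to `ℕ` by the identity. -/
def ext0 (n : ℕ) (x : Equiv.Perm (Fin n)) (j : ℕ) : ℕ :=
  if h : j < n then (x ⟨j, h⟩ : ℕ) else j

lemma ext0_lt {n : ℕ} (x : Equiv.Perm (Fin n)) {j : ℕ} (h : j < n) : ext0 n x j < n := by
  rw [ext0, dif_pos h]
  exact (x ⟨j, h⟩).isLt

lemma ext0_spec {n : ℕ} (x : Equiv.Perm (Fin n)) {j : ℕ} (h : j < n) :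
    ext0 n x j = (x ⟨j, h⟩ : ℕ) := by rw [ext0, dif_pos h]

lemma ext0_mul {n : ℕ} (x y : Equiv.Perm (Fin n)) (j : ℕ) :
    ext0 n (x * y) j = ext0 n x (ext0 n y j) := by
  by_cases h : j < n
  · rw [ext0_spec (x * y) h, ext0_spec y h, ext0_spec x (y ⟨j, h⟩).isLt]
    rfl
  · simp only [ext0, dif_neg h]

lemma ext0_one {n : ℕ} (j : ℕ) : ext0 n (1 : Equiv.Perm (Fin n)) j = j := by
  by_cases h : j < n
  · rw [ext0, dif_pos h]; rfl
  · rw [ext0, dif_neg h]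


/-- The underlying function of the section `ρ`. -/
def rho0Fun (d n : ℕ) (u : Equiv.Perm ℕ) (x : Equiv.Perm (Fin n)) (i : ℕ) : ℕ :=
  if i < n * d then
    d * ext0 n x (i / d) + (u ^ ((ext0 n x (i / d) : ℤ) - ((i / d : ℕ) : ℤ))) (i % d)
  else i

lemma rho0Fun_pos (d n : ℕ) (u : Equiv.Perm ℕ) (x : Equiv.Perm (Fin n)) {i : ℕ}
    (h : i < n * d) : rho0Fun d n u x i
      = d * ext0 n x (i / d) + (u ^ ((ext0 n x (i / d) : ℤ) - ((i / d : ℕ) : ℤ))) (i % d) :=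
  if_pos h

lemma rho0Fun_neg (d n : ℕ) (u : Equiv.Perm ℕ) (x : Equiv.Perm (Fin n)) {i : ℕ}
    (h : ¬ i < n * d) : rho0Fun d n u x i = i := if_neg h

lemma rho0Fun_comp (d n : ℕ) (hd : 0 < d) (u : Equiv.Perm ℕ)
    (hu : ∀ (e : ℤ) (z : ℕ), z < d → (u ^ e) z < d) (x y : Equiv.Perm (Fin n)) (i : ℕ) :
    rho0Fun d n u x (rho0Fun d n u y i) = rho0Fun d n u (x * y) i := by
  by_cases h : i < n * d
  · have hjn : i / d < n := by rw [Nat.div_lt_iff_lt_mul hd]; omega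
    have hrd : i % d < d := Nat.mod_lt _ hd
    set j := i / d
    set r := i % d
    have hj' : ext0 n y j < n := ext0_lt y hjn
    have hr' : (u ^ ((ext0 n y j : ℤ) - (j : ℤ))) r < d := hu _ _ hrd
    have hval : d * ext0 n y j + (u ^ ((ext0 n y j : ℤ) - (j : ℤ))) r < n * d := by
      have h1 : ext0 n y j + 1 ≤ n := hj'
      have h2 : d * (ext0 n y j + 1) ≤ d * n := Nat.mul_le_mul_left d h1
      rw [Nat.mul_succ, Nat.mul_comm d n] at h2
      omega
    rw [rho0Fun_pos d n u y h, rho0Fun_pos d n u x hval, rho0Fun_pos d n u (x * y) h,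
      div_helper hd _ _ hr', mod_helper hd _ _ hr', ext0_mul]
    congr 1
    have heq : (u ^ ((ext0 n x (ext0 n y j) : ℤ) - (ext0 n y j : ℤ)))
        ((u ^ ((ext0 n y j : ℤ) - (j : ℤ))) r)
        = ((u ^ ((ext0 n x (ext0 n y j) : ℤ) - (ext0 n y j : ℤ))) *
          (u ^ ((ext0 n y j : ℤ) - (j : ℤ)))) r := rfl
    rw [heq, ← zpow_add]
    congr 2
    ring
  · rw [rho0Fun_neg d n u y h, rho0Fun_neg d n u x h, rho0Fun_neg d n u (x * y) h]

lemma rho0Fun_one (d n : ℕ) (u : Equiv.Perm ℕ) (i : ℕ) :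
    rho0Fun d n u (1 : Equiv.Perm (Fin n)) i = i := by
  by_cases h : i < n * d
  · rw [rho0Fun_pos d n u 1 h, ext0_one, sub_self, zpow_zero, Equiv.Perm.one_apply]
    exact Nat.div_add_mod i d
  · exact rho0Fun_neg d n u 1 h

/-- The section homomorphism `Perm (Fin n) →* Perm ℕ`. -/
def rho0 (d n : ℕ) (hd : 0 < d) (u : Equiv.Perm ℕ)
    (hu : ∀ (e : ℤ) (z : ℕ), z < d → (u ^ e) z < d) : Equiv.Perm (Fin n) →* Equiv.Perm ℕ :=
  MonoidHom.mk' (fun x =>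
    { toFun := rho0Fun d n u x
      invFun := rho0Fun d n u x⁻¹
      left_inv := fun i => by
        rw [rho0Fun_comp d n hd u hu, inv_mul_cancel, rho0Fun_one]
      right_inv := fun i => by
        rw [rho0Fun_comp d n hd u hu, mul_inv_cancel, rho0Fun_one] })
    (fun x y => Equiv.ext fun i => (rho0Fun_comp d n hd u hu x y i).symm)

lemma rho0_apply (d n : ℕ) (hd : 0 < d) (u : Equiv.Perm ℕ)
    (hu : ∀ (e : ℤ) (z : ℕ), z < d → (u ^ e) z < d) (x : Equiv.Perm (Fin n)) (i : ℕ) :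
    rho0 d n hd u hu x i = rho0Fun d n u x i := rfl

end Aux16

open Aux16

/-- If the order `q` of `τ` is odd, the extension `1 → Aₙ(σ) → Bₙ(σ) → Sₙ → 1`
splits: there is a surjection `φ : Bₙ(σ) → Sₙ` with kernel `Aₙ(σ)` sending `σ_s` to
`(s, s+1)`, and a homomorphism `ρ : Sₙ → Bₙ(σ)` with `φ ∘ ρ = id`; concretely `ρ`
sends `(s, s+1)` to `σ_s·ω^{(s-1)d}(a)` where `a = τ^k·ω^d(τ^ℓ)` with
`k + ℓ ≡ -1 (mod q)`. -/
theorem stmt_16 (d n : ℕ) (hd : 2 ≤ d) (hn : 3 ≤ n) (ς₁ ς₂ τ : Equiv.Perm ℕ)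
    (h₁ : ∀ k, d ≤ k → ς₁ k = k) (h₂ : ∀ k, d ≤ k → ς₂ k = k)
    (hτ : ς₁ * ς₂ = τ) (hτ' : ς₂ * ς₁ = τ)
    (σ : Equiv.Perm ℕ) (hσ : σ = theta d * ς₁ * shift d ς₂)
    (σs : ℕ → Equiv.Perm ℕ) (hσs : ∀ s, σs s = shift ((s - 1) * d) σ)
    (B T A : Subgroup (Equiv.Perm ℕ))
    (hB : B = Subgroup.closure {x | ∃ s, 1 ≤ s ∧ s ≤ n - 1 ∧ x = σs s})
    (hT : T = Subgroup.closure {x | ∃ k < n, x ∈ Subgroup.zpowers (shift (k * d) τ)})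
    (hA : A = B ⊓ T)
    (q : ℕ) (hq : q = orderOf τ) (hodd : Odd q) :
    ∃ φ : ↥B →* Equiv.Perm (Fin n),
      Function.Surjective φ ∧
      φ.ker = A.subgroupOf B ∧
      (∀ (s : ℕ) (h1 : 1 ≤ s) (h2 : s ≤ n - 1) (hmem : σs s ∈ B),
        φ ⟨σs s, hmem⟩ =
          Equiv.swap (⟨s - 1, by omega⟩ : Fin n) (⟨s, by omega⟩ : Fin n)) ∧
      ∃ ρ : Equiv.Perm (Fin n) →* ↥B,
        φ.comp ρ = MonoidHom.id _ ∧
        ∃ k ℓ : ℤ, (q : ℤ) ∣ k + ℓ + 1 ∧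
          ∀ (s : ℕ) (h1 : 1 ≤ s) (h2 : s ≤ n - 1),
            ((ρ (Equiv.swap (⟨s - 1, by omega⟩ : Fin n) (⟨s, by omega⟩ : Fin n)) :
                Equiv.Perm ℕ) =
              σs s * shift ((s - 1) * d) (τ ^ k * shift d (τ ^ ℓ))) := by
  classical
  have hd0 : 0 < d := by omega
  obtain ⟨k₀, hk₀⟩ := hodd
  -- basic membership facts
  have hς₁F : ς₁ ∈ Fx d := h₁
  have hς₂F : ς₂ ∈ Fx d := h₂
  have hτF : τ ∈ Fx d := by rw [← hτ]; exact mul_mem hς₁F hς₂F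
  have hτkF : τ ^ k₀ ∈ Fx d := pow_mem hτF k₀
  have hτq : τ ^ q = 1 := by rw [hq]; exact pow_orderOf_eq_one τ
  -- commutation
  have hc1 : Commute ς₁ τ := by
    show ς₁ * τ = τ * ς₁
    conv_lhs => rw [← hτ']
    conv_rhs => rw [← hτ]
    exact (mul_assoc _ _ _).symm
  have hc2 : Commute ς₂ τ := by
    show ς₂ * τ = τ * ς₂
    conv_lhs => rw [← hτ]
    conv_rhs => rw [← hτ']
    exact (mul_assoc _ _ _).symm
  -- the twist u
  set u : Equiv.Perm ℕ := ς₁ * τ ^ k₀ with hu_def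
  have huF : u ∈ Fx d := mul_mem hς₁F hτkF
  have hu : ∀ (e : ℤ) (z : ℕ), z < d → (u ^ e) z < d :=
    fun e z hz => fix_lt (Fx_prop (zpow_mem huF e)) hz
  have hcu : Commute u τ := hc1.mul_left ((Commute.refl τ).pow_left k₀)
  have huinv : u⁻¹ = ς₂ * τ ^ k₀ := by
    refine inv_eq_of_mul_eq_one_right ?_
    have e1 : τ ^ k₀ * ς₂ = ς₂ * τ ^ k₀ := ((hc2.symm).pow_left k₀).eq
    calc (ς₁ * τ ^ k₀) * (ς₂ * τ ^ k₀)
        = ς₁ * ((τ ^ k₀ * ς₂) * τ ^ k₀) := by group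
      _ = ς₁ * ((ς₂ * τ ^ k₀) * τ ^ k₀) := by rw [e1]
      _ = (ς₁ * ς₂) * (τ ^ k₀ * τ ^ k₀) := by group
      _ = τ * τ ^ (2 * k₀) := by rw [hτ, ← pow_add, two_mul]
      _ = τ ^ q := by rw [hk₀, pow_succ']
      _ = 1 := hτq
  -- explicit formula for σ
  have hς₁lt : ∀ {x}, x < d → ς₁ x < d := fun hx => fix_lt h₁ hx
  have hς₂lt : ∀ {x}, x < d → ς₂ x < d := fun hx => fix_lt h₂ hx
  have hσ_apply : ∀ x, σ x = if x < d then ς₁ x + d else if x < 2 * d then ς₂ (x - d) else x := by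
    intro x
    rw [hσ, Equiv.Perm.mul_apply, Equiv.Perm.mul_apply]
    by_cases h : x < d
    · rw [shift_apply_lt _ _ h, if_pos h, theta_apply, if_pos (hς₁lt h)]
    · push_neg at h
      rw [shift_apply_ge _ _ h, h₁ _ (by omega), if_neg (by omega)]
      by_cases h2 : x < 2 * d
      · have hlt : ς₂ (x - d) < d := hς₂lt (by omega)
        rw [if_pos h2, theta_apply, if_neg (by omega), if_pos (by omega)]
        omega
      · push_neg at h2
        rw [h₂ _ (by omega), if_neg (by omega : ¬ x < 2 * d), theta_apply, if_neg (by omega),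
          if_neg (by omega)]
        omega
  have hσfix2 : ∀ x, 2 * d ≤ x → σ x = x := by
    intro x hx
    rw [hσ_apply, if_neg (by omega), if_neg (by omega)]
  -- σ² = τ · ω(τ)
  have hσ2 : σ * σ = τ * shift d τ := by
    ext y
    rw [Equiv.Perm.mul_apply, Equiv.Perm.mul_apply]
    by_cases h : y < d
    · rw [shift_apply_lt _ _ h, hσ_apply y, if_pos h,
        hσ_apply (ς₁ y + d), if_neg (by have := hς₁lt h; omega),
        if_pos (by have := hς₁lt h; omega), Nat.add_sub_cancel, ← hτ']
      rfl
    · push_neg at h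
      by_cases h2 : y < 2 * d
      · have hlt : ς₂ (y - d) < d := hς₂lt (by omega)
        rw [shift_apply_ge _ _ h, hσ_apply y, if_neg (by omega), if_pos h2,
          hσ_apply (ς₂ (y - d)), if_pos hlt, Fx_prop hτF _ (by omega : d ≤ τ (y - d) + d),
          ← hτ]
        rfl
      · push_neg at h2
        rw [hσfix2 y h2, hσfix2 y h2, shift_apply_ge _ _ h,
          Fx_prop hτF _ (by omega : d ≤ y - d)]
        rw [show y - d + d = y from by omega, Fx_prop hτF _ (by omega : d ≤ y)]
  have hcτshift : Commute τ (shift d τ) := by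
    show τ * shift d τ = shift d τ * τ
    ext y
    rw [Equiv.Perm.mul_apply, Equiv.Perm.mul_apply]
    by_cases h : y < d
    · rw [shift_apply_lt _ _ h, shift_apply_lt _ _ (fix_lt (Fx_prop hτF) h)]
    · push_neg at h
      rw [shift_apply_ge _ _ h, Fx_prop hτF _ (by omega : d ≤ τ (y - d) + d),
        Fx_prop hτF _ h]
      rw [shift_apply_ge _ _ h]
  have hσs' : ∀ s' : ℕ, σs (s' + 1) = shift (s' * d) σ := by
    intro s'
    rw [hσs]
    norm_num
  -- block behaviour of σs
  have hblkσs : ∀ s' : ℕ, ∀ y, σs (s' + 1) y / d =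
      if y / d = s' then s' + 1 else if y / d = s' + 1 then s' else y / d := by
    intro s' y
    have hmc : s' * d = d * s' := Nat.mul_comm _ _
    have e1 : (s' + 1) * d = s' * d + d := by rw [Nat.add_mul, one_mul]
    rw [hσs']
    by_cases h : y < s' * d
    · have hy : y / d < s' := by rw [Nat.div_lt_iff_lt_mul hd0]; omega
      rw [shift_apply_lt _ _ h, if_neg (by omega), if_neg (by omega)]
    · push_neg at h
      rw [shift_apply_ge _ _ h]
      set t := y - s' * d with ht
      have hyt : y = d * s' + t := by omega
      by_cases h1 : t < d
      · have hyd : y / d = s' := by rw [hyt, div_helper hd0 _ _ h1]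
        have hv : σ t + s' * d = d * (s' + 1) + ς₁ t := by
          rw [hσ_apply, if_pos h1]
          have := hς₁lt h1
          rw [Nat.mul_add d s' 1]
          omega
        rw [hv, div_helper hd0 _ _ (hς₁lt h1), if_pos hyd]
      · push_neg at h1
        by_cases h2 : t < 2 * d
        · have hyd : y / d = s' + 1 := by
            have : y = d * (s' + 1) + (t - d) := by rw [Nat.mul_add d s' 1]; omega
            rw [this, div_helper hd0 _ _ (by omega)]
          have hlt : ς₂ (t - d) < d := hς₂lt (by omega)
          have hv : σ t + s' * d = d * s' + ς₂ (t - d) := by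
            rw [hσ_apply, if_neg (by omega), if_pos h2]
            omega
          rw [hv, div_helper hd0 _ _ hlt, if_neg (by omega), if_pos hyd]
        · push_neg at h2
          have hyd : s' + 2 ≤ y / d := by
            rw [Nat.le_div_iff_mul_le hd0, Nat.add_mul]
            omega
          rw [hσfix2 t h2, if_neg (by omega), if_neg (by omega)]
          congr 1
          omega
  have hσsP : ∀ s' : ℕ, s' + 1 ≤ n - 1 → σs (s' + 1) ∈ Pgrp d n hd0 := by
    intro s' hs'
    constructor
    · intro i j hij
      rw [hblkσs s' i, hblkσs s' j, hij]
    · intro y hy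
      have e2 : (s' + 2) * d ≤ n * d := Nat.mul_le_mul_right d (by omega)
      rw [Nat.add_mul] at e2
      rw [hσs', shift_apply_ge _ _ (by omega : s' * d ≤ y),
        hσfix2 _ (by omega : 2 * d ≤ y - s' * d)]
      omega
  -- blocks of shifted block permutations
  have hsblk : ∀ (jj : ℕ) (g : Equiv.Perm ℕ), g ∈ Fx d → ∀ y, shift (jj * d) g y / d = y / d := by
    intro jj g hg y
    by_cases h : y < jj * d
    · rw [shift_apply_lt _ _ h]
    · push_neg at h
      rw [shift_apply_ge _ _ h]
      by_cases h1 : y - jj * d < d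
      · have hyt : y = d * jj + (y - jj * d) := by
          have := Nat.mul_comm jj d
          omega
        have hv : g (y - jj * d) + jj * d = d * jj + g (y - jj * d) := by
          have := Nat.mul_comm jj d
          omega
        rw [hv, div_helper hd0 _ _ (fix_lt (Fx_prop hg) h1)]
        conv_rhs => rw [hyt]
        rw [div_helper hd0 _ _ h1]
      · push_neg at h1
        rw [Fx_prop hg _ h1]
        congr 1
        omega
  have hsmem : ∀ (jj : ℕ), jj < n → ∀ (g : Equiv.Perm ℕ), g ∈ Fx d →
      shift (jj * d) g ∈ Pgrp d n hd0 := by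
    intro jj hjj g hg
    constructor
    · intro i j hij
      rw [hsblk jj g hg, hsblk jj g hg, hij]
    · intro y hy
      have e2 : (jj + 1) * d ≤ n * d := Nat.mul_le_mul_right d (by omega)
      rw [Nat.add_mul] at e2
      rw [shift_apply_ge _ _ (by omega : jj * d ≤ y), Fx_prop hg _ (by omega)]
      omega
  have hBP : B ≤ Pgrp d n hd0 := by
    rw [hB, Subgroup.closure_le]
    rintro x ⟨s, hs1, hs2, rfl⟩
    obtain ⟨s', rfl⟩ : ∃ s', s = s' + 1 := ⟨s - 1, by omega⟩
    exact hσsP s' (by omega)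
  have hTP : T ≤ Pgrp d n hd0 := by
    rw [hT, Subgroup.closure_le]
    rintro x ⟨kk, hkk, hx⟩
    obtain ⟨z, rfl⟩ := Subgroup.mem_zpowers_iff.mp hx
    rw [← shift_zpow]
    exact hsmem kk hkk _ (zpow_mem hτF z)
  -- the element a = τ^k₀ · ω(τ^k₀)
  set w : Equiv.Perm ℕ := τ ^ k₀ * shift d (τ ^ k₀) with hw_def
  have hτklt : ∀ {z : ℕ}, z < d → (τ ^ k₀) z < d := fun hz => fix_lt (Fx_prop hτkF) hz
  have hw_apply : ∀ z, w z = if z < d then (τ ^ k₀) z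
      else if z < 2 * d then (τ ^ k₀) (z - d) + d else z := by
    intro z
    rw [hw_def, Equiv.Perm.mul_apply]
    by_cases h : z < d
    · rw [shift_apply_lt _ _ h, if_pos h]
    · push_neg at h
      rw [shift_apply_ge _ _ h, if_neg (by omega)]
      by_cases h2 : z < 2 * d
      · rw [if_pos h2, Fx_prop hτkF _ (by omega : d ≤ (τ ^ k₀) (z - d) + d)]
      · push_neg at h2
        rw [Fx_prop hτkF _ (by omega : d ≤ z - d), if_neg (by omega),
          show z - d + d = z from by omega, Fx_prop hτkF _ (by omega : d ≤ z)]
  have hu_app : ∀ z, u z = ς₁ ((τ ^ k₀) z) := fun z => rfl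
  have huinv_app : ∀ z, u⁻¹ z = ς₂ ((τ ^ k₀) z) := fun z => by rw [huinv]; rfl
  -- the key identity: ρ₀ of an adjacent swap
  have hρswapL7 : ∀ (s' : ℕ) (hs' : s' + 1 ≤ n - 1),
      rho0 d n hd0 u hu (Equiv.swap (⟨s', by omega⟩ : Fin n) (⟨s' + 1, by omega⟩ : Fin n))
        = σs (s' + 1) * shift (s' * d) w := by
    intro s' hs'
    have hext : ∀ j, ext0 n (Equiv.swap (⟨s', by omega⟩ : Fin n) (⟨s' + 1, by omega⟩ : Fin n)) j
        = if j = s' then s' + 1 else if j = s' + 1 then s' else j := by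
      intro j
      by_cases hj : j < n
      · rw [ext0_spec _ hj]
        by_cases h1 : j = s'
        · rw [if_pos h1, show (⟨j, hj⟩ : Fin n) = ⟨s', by omega⟩ from Fin.ext h1,
            Equiv.swap_apply_left]
        · by_cases h2 : j = s' + 1
          · rw [if_neg h1, if_pos h2, show (⟨j, hj⟩ : Fin n) = ⟨s' + 1, by omega⟩ from Fin.ext h2,
              Equiv.swap_apply_right]
          · rw [if_neg h1, if_neg h2, Equiv.swap_apply_of_ne_of_ne
              (fun hc => h1 (congrArg Fin.val hc)) (fun hc => h2 (congrArg Fin.val hc))]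
      · push_neg at hj
        rw [ext0, dif_neg (by omega), if_neg (by omega), if_neg (by omega)]
    ext y
    rw [Equiv.Perm.mul_apply, rho0_apply, hσs']
    have hmc : s' * d = d * s' := Nat.mul_comm _ _
    have e1 : d * (s' + 1) = d * s' + d := by ring
    have e2 : (s' + 2) * d = s' * d + 2 * d := by rw [Nat.add_mul]
    have e3 : (s' + 2) * d ≤ n * d := Nat.mul_le_mul_right d (by omega)
    by_cases hy : y < n * d
    · rw [rho0Fun_pos d n u _ hy, hext]
      by_cases c1 : y < s' * d
      · have hjlt : y / d < s' := by rw [Nat.div_lt_iff_lt_mul hd0]; omega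
        rw [if_neg (by omega), if_neg (by omega), sub_self, zpow_zero,
          shift_apply_lt _ _ c1, shift_apply_lt _ _ c1, Equiv.Perm.one_apply]
        exact Nat.div_add_mod y d
      · push_neg at c1
        by_cases c2 : y - s' * d < d
        · have hyt : y = d * s' + (y - s' * d) := by omega
          have hdiv : y / d = s' := by conv_lhs => rw [hyt, div_helper hd0 _ _ c2]
          have hmod : y % d = y - s' * d := by conv_lhs => rw [hyt, mod_helper hd0 _ _ c2]
          rw [hdiv, hmod, if_pos rfl,
            show ((s' + 1 : ℕ) : ℤ) - (s' : ℤ) = 1 from by push_cast; ring, zpow_one,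
            shift_apply_ge _ _ c1, hw_apply, if_pos c2,
            shift_apply_ge _ _ (by omega : s' * d ≤ (τ ^ k₀) (y - s' * d) + s' * d),
            Nat.add_sub_cancel, hσ_apply, if_pos (hτklt c2), hu_app]
          omega
        · push_neg at c2
          by_cases c3 : y - s' * d < 2 * d
          · have hyt : y = d * (s' + 1) + (y - s' * d - d) := by omega
            have hdiv : y / d = s' + 1 := by
              conv_lhs => rw [hyt, div_helper hd0 _ _ (by omega)]
            have hmod : y % d = y - s' * d - d := by
              conv_lhs => rw [hyt, mod_helper hd0 _ _ (by omega)]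
            rw [hdiv, hmod, if_neg (by omega), if_pos rfl,
              show ((s' : ℕ) : ℤ) - ((s' + 1 : ℕ) : ℤ) = -1 from by push_cast; ring,
              zpow_neg_one, huinv_app,
              shift_apply_ge _ _ c1, hw_apply, if_neg (by omega), if_pos c3,
              shift_apply_ge _ _ (by omega : s' * d ≤ (τ ^ k₀) (y - s' * d - d) + d + s' * d),
              Nat.add_sub_cancel, hσ_apply, if_neg (by omega : ¬ (τ ^ k₀) (y - s' * d - d) + d < d),
              if_pos (by have := hτklt (show y - s' * d - d < d from by omega); omega),
              Nat.add_sub_cancel]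
            omega
          · push_neg at c3
            have hjge : s' + 2 ≤ y / d := by rw [Nat.le_div_iff_mul_le hd0]; omega
            rw [if_neg (by omega), if_neg (by omega), sub_self, zpow_zero,
              Equiv.Perm.one_apply,
              shift_apply_ge _ _ c1, hw_apply, if_neg (by omega), if_neg (by omega),
              show y - s' * d + s' * d = y from by omega,
              shift_apply_ge _ _ (by omega : s' * d ≤ y), hσfix2 _ (by omega)]
            have := Nat.div_add_mod y d
            omega
    · push_neg at hy
      rw [rho0Fun_neg d n u _ (by omega),
        shift_apply_ge _ _ (by omega : s' * d ≤ y), hw_apply, if_neg (by omega),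
        if_neg (by omega), show y - s' * d + s' * d = y from by omega,
        shift_apply_ge _ _ (by omega : s' * d ≤ y), hσfix2 _ (by omega)]
      omega
  -- Φ sends σs to the adjacent swap
  have hΦσs : ∀ (s' : ℕ) (hs' : s' + 1 ≤ n - 1) (hP : σs (s' + 1) ∈ Pgrp d n hd0),
      Phi d n hd0 ⟨σs (s' + 1), hP⟩
        = Equiv.swap (⟨s', by omega⟩ : Fin n) (⟨s' + 1, by omega⟩ : Fin n) := by
    intro s' hs' hP
    ext k
    rw [Phi_apply hd0 ⟨σs (s' + 1), hP⟩ k]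
    show σs (s' + 1) ((k : ℕ) * d) / d = _
    rw [hblkσs s' ((k : ℕ) * d), Nat.mul_div_cancel _ hd0]
    by_cases h1 : (k : ℕ) = s'
    · rw [if_pos h1, show k = (⟨s', by omega⟩ : Fin n) from Fin.ext h1, Equiv.swap_apply_left]
    · by_cases h2 : (k : ℕ) = s' + 1
      · rw [if_neg h1, if_pos h2, show k = (⟨s' + 1, by omega⟩ : Fin n) from Fin.ext h2,
          Equiv.swap_apply_right]
      · rw [if_neg h1, if_neg h2, Equiv.swap_apply_of_ne_of_ne
          (fun hc => h1 (congrArg Fin.val hc)) (fun hc => h2 (congrArg Fin.val hc))]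
  -- powers of σs
  have hpow2k : ∀ s' : ℕ, (σs (s' + 1)) ^ (2 * k₀) = shift (s' * d) w := by
    intro s'
    have h2 : (σs (s' + 1)) ^ 2 = shift (s' * d) (τ * shift d τ) := by
      rw [hσs', pow_two, ← shift_mul, hσ2]
    rw [pow_mul, h2, ← shift_pow, hcτshift.mul_pow, ← shift_pow, ← hw_def]
  have hρswap_pow : ∀ (s' : ℕ) (hs' : s' + 1 ≤ n - 1),
      rho0 d n hd0 u hu (Equiv.swap (⟨s', by omega⟩ : Fin n) (⟨s' + 1, by omega⟩ : Fin n))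
        = (σs (s' + 1)) ^ q := by
    intro s' hs'
    rw [hρswapL7 s' hs', hk₀, pow_succ', hpow2k s']
  -- generation of Perm (Fin n) by adjacent swaps
  have hgen : ∀ (Q : Equiv.Perm (Fin n) → Prop),
      (∀ (s' : ℕ) (hs' : s' + 1 ≤ n - 1),
        Q (Equiv.swap (⟨s', by omega⟩ : Fin n) (⟨s' + 1, by omega⟩ : Fin n))) →
      Q 1 → (∀ a b, Q a → Q b → Q (a * b)) → ∀ x, Q x := by
    intro Q hQswap hQ1 hQmul x
    obtain ⟨n', hn'⟩ : ∃ n', n = n' + 1 := ⟨n - 1, by omega⟩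
    subst hn'
    have hx : x ∈ Submonoid.closure
        (Set.range fun i : Fin n' => Equiv.swap i.castSucc i.succ) := by
      rw [Equiv.Perm.mclosure_swap_castSucc_succ]; trivial
    refine Submonoid.closure_induction ?_ hQ1 (fun a b _ _ ha hb => hQmul a b ha hb) hx
    rintro x ⟨i, rfl⟩
    have hilt := i.isLt
    show Q (Equiv.swap i.castSucc i.succ)
    have h := hQswap (i : ℕ) (by omega)
    have e1 : (Fin.castSucc i) = (⟨(i : ℕ), by omega⟩ : Fin (n' + 1)) := Fin.ext rfl
    have e2 : (Fin.succ i) = (⟨(i : ℕ) + 1, by omega⟩ : Fin (n' + 1)) := Fin.ext rfl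
    rw [e1, e2]
    exact h
  -- σs and ρ₀ land in B
  have hσsB : ∀ (s' : ℕ), s' + 1 ≤ n - 1 → σs (s' + 1) ∈ B := by
    intro s' hs'
    rw [hB]
    exact Subgroup.subset_closure ⟨s' + 1, by omega, hs', rfl⟩
  have hρB : ∀ x, rho0 d n hd0 u hu x ∈ B := by
    refine hgen (fun x => rho0 d n hd0 u hu x ∈ B) ?_ ?_ ?_
    · intro s' hs'
      show rho0 d n hd0 u hu _ ∈ B
      rw [hρswap_pow s' hs']
      exact pow_mem (hσsB s' hs') q
    · show rho0 d n hd0 u hu 1 ∈ B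
      rw [map_one]; exact one_mem B
    · intro a b ha hb
      show rho0 d n hd0 u hu (a * b) ∈ B
      rw [map_mul]; exact mul_mem ha hb
  set ρ : Equiv.Perm (Fin n) →* ↥B := (rho0 d n hd0 u hu).codRestrict B hρB with hρ_def
  set φ : ↥B →* Equiv.Perm (Fin n) := (Phi d n hd0).comp (Subgroup.inclusion hBP) with hφ_def
  have hφ_val : ∀ (g : Equiv.Perm ℕ) (hg : g ∈ B),
      φ ⟨g, hg⟩ = Phi d n hd0 ⟨g, hBP hg⟩ := fun g hg => rfl
  have hρ_val : ∀ x, ((ρ x : ↥B) : Equiv.Perm ℕ) = rho0 d n hd0 u hu x := fun x => rfl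
  -- φ sends σs to adjacent swaps
  have hφσs : ∀ (s : ℕ) (h1 : 1 ≤ s) (h2 : s ≤ n - 1) (hmem : σs s ∈ B),
      φ ⟨σs s, hmem⟩ = Equiv.swap (⟨s - 1, by omega⟩ : Fin n) (⟨s, by omega⟩ : Fin n) := by
    intro s h1 h2 hmem
    obtain ⟨s', rfl⟩ : ∃ s', s = s' + 1 := ⟨s - 1, by omega⟩
    simp only [Nat.add_sub_cancel]
    rw [hφ_val]
    exact hΦσs s' (by omega) (hBP hmem)
  -- φ ∘ ρ = id
  have hcompQ : ∀ x, φ (ρ x) = x := by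
    refine hgen (fun x => φ (ρ x) = x) ?_ ?_ ?_
    · intro s' hs'
      have hval : ρ (Equiv.swap (⟨s', by omega⟩ : Fin n) (⟨s' + 1, by omega⟩ : Fin n))
          = ⟨(σs (s' + 1)) ^ q, by rw [← hρswap_pow s' hs']; exact hρB _⟩ :=
        Subtype.ext (hρswap_pow s' hs')
      rw [hval, hφ_val]
      have hsub : (⟨(σs (s' + 1)) ^ q, hBP (by rw [← hρswap_pow s' hs']; exact hρB _)⟩ :
            ↥(Pgrp d n hd0))
          = (⟨σs (s' + 1), hσsP s' hs'⟩ : ↥(Pgrp d n hd0)) ^ q := by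
        ext
        rfl
      rw [hsub, map_pow, hΦσs s' hs', hk₀, pow_succ, pow_mul, pow_two, Equiv.swap_mul_self,
        one_pow, one_mul]
    · show φ (ρ 1) = 1
      rw [map_one, map_one]
    · intro a b ha hb
      show φ (ρ (a * b)) = a * b
      rw [map_mul, map_mul, ha, hb]
  have hcomp : φ.comp ρ = MonoidHom.id (Equiv.Perm (Fin n)) := MonoidHom.ext fun x => hcompQ x
  have hsurj : Function.Surjective φ := fun x => ⟨ρ x, hcompQ x⟩
  -- shifted generators: action on single blocks
  have hsb2 : ∀ (jj : ℕ) (g : Equiv.Perm ℕ), g ∈ Fx d → ∀ y, y / d ≠ jj →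
      shift (jj * d) g y = y := by
    intro jj g hg y hy
    by_cases h : y < jj * d
    · exact shift_apply_lt _ _ h
    · push_neg at h
      have hj1 : jj ≤ y / d := (Nat.le_div_iff_mul_le hd0).mpr h
      have hj2 : jj + 1 ≤ y / d := by omega
      have hj3 : (jj + 1) * d ≤ y := (Nat.le_div_iff_mul_le hd0).mp hj2
      rw [Nat.add_mul] at hj3
      rw [shift_apply_ge _ _ h, Fx_prop hg _ (by omega)]
      omega
  have hsb1 : ∀ (jj : ℕ) (g : Equiv.Perm ℕ), g ∈ Fx d → ∀ y, y / d = jj →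
      shift (jj * d) g y = d * jj + g (y % d) := by
    intro jj g hg y hdiv
    have hmc : jj * d = d * jj := Nat.mul_comm _ _
    have hyt := Nat.div_add_mod y d
    rw [hdiv] at hyt
    rw [shift_apply_ge _ _ (by omega : jj * d ≤ y), show y - jj * d = y % d from by omega]
    omega
  -- conjugation of the generators of T by ρ₀
  have hconj : ∀ (x : Equiv.Perm (Fin n)) (jj : ℕ), jj < n →
      rho0 d n hd0 u hu x * shift (jj * d) τ
        = shift (ext0 n x jj * d) τ * rho0 d n hd0 u hu x := by
    intro x jj hjj
    ext y
    rw [Equiv.Perm.mul_apply, Equiv.Perm.mul_apply, rho0_apply, rho0_apply]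
    by_cases hy : y < n * d
    · have hjn : y / d < n := by rw [Nat.div_lt_iff_lt_mul hd0]; omega
      have hrd : y % d < d := Nat.mod_lt _ hd0
      by_cases hb : y / d = jj
      · have hτr : τ (y % d) < d := fix_lt (Fx_prop hτF) hrd
        have hmc : jj * d = d * jj := Nat.mul_comm _ _
        have hlt2 : d * jj + τ (y % d) < n * d := by
          have h5 : (jj + 1) * d ≤ n * d := Nat.mul_le_mul_right d (by omega)
          rw [Nat.add_mul] at h5
          omega
        rw [hsb1 jj τ hτF y hb, rho0Fun_pos d n u _ hlt2, div_helper hd0 _ _ hτr,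
          mod_helper hd0 _ _ hτr, rho0Fun_pos d n u _ hy, hb]
        have hult : (u ^ ((ext0 n x jj : ℤ) - (jj : ℤ))) (y % d) < d := hu _ _ hrd
        have hlt3 : d * ext0 n x jj + (u ^ ((ext0 n x jj : ℤ) - (jj : ℤ))) (y % d) < n * d := by
          have h5 : (ext0 n x jj + 1) * d ≤ n * d :=
            Nat.mul_le_mul_right d (by have := ext0_lt x hjj; omega)
          rw [Nat.add_mul] at h5
          have hmc2 : ext0 n x jj * d = d * ext0 n x jj := Nat.mul_comm _ _
          omega
        rw [hsb1 (ext0 n x jj) τ hτF _ (div_helper hd0 _ _ hult),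
          mod_helper hd0 _ _ hult]
        congr 1
        have hcze : Commute (u ^ ((ext0 n x jj : ℤ) - (jj : ℤ))) τ := hcu.zpow_left _
        calc (u ^ ((ext0 n x jj : ℤ) - (jj : ℤ))) (τ (y % d))
            = ((u ^ ((ext0 n x jj : ℤ) - (jj : ℤ))) * τ) (y % d) := rfl
          _ = (τ * (u ^ ((ext0 n x jj : ℤ) - (jj : ℤ)))) (y % d) := by rw [hcze.eq]
          _ = τ ((u ^ ((ext0 n x jj : ℤ) - (jj : ℤ))) (y % d)) := rfl
      · rw [hsb2 jj τ hτF y hb, rho0Fun_pos d n u _ hy]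
        refine (hsb2 (ext0 n x jj) τ hτF _ ?_).symm
        have hult : (u ^ ((ext0 n x (y / d) : ℤ) - ((y / d : ℕ) : ℤ))) (y % d) < d := hu _ _ hrd
        rw [div_helper hd0 _ _ hult]
        intro hcontra
        apply hb
        rw [ext0_spec x hjn, ext0_spec x hjj] at hcontra
        have := x.injective (Fin.ext hcontra)
        exact congrArg Fin.val this
    · push_neg at hy
      have hge : n ≤ y / d := (Nat.le_div_iff_mul_le hd0).mpr hy
      rw [hsb2 jj τ hτF y (by omega), rho0Fun_neg d n u _ (by omega),
        hsb2 (ext0 n x jj) τ hτF y (by have := ext0_lt x hjj; omega)]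
  -- ρ₀ normalizes T
  have hconjT : ∀ (x : Equiv.Perm (Fin n)), ∀ t ∈ T,
      rho0 d n hd0 u hu x * t * (rho0 d n hd0 u hu x)⁻¹ ∈ T := by
    intro x t ht
    rw [hT] at ht ⊢
    refine Subgroup.closure_induction
      (p := fun t _ => rho0 d n hd0 u hu x * t * (rho0 d n hd0 u hu x)⁻¹ ∈
        Subgroup.closure {x | ∃ k < n, x ∈ Subgroup.zpowers (shift (k * d) τ)}) ?_ ?_ ?_ ?_ ht
    · rintro y ⟨kk, hkk, hy⟩
      obtain ⟨z, rfl⟩ := Subgroup.mem_zpowers_iff.mp hy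
      show rho0 d n hd0 u hu x * (shift (kk * d) τ) ^ z * (rho0 d n hd0 u hu x)⁻¹ ∈
        Subgroup.closure {x | ∃ k < n, x ∈ Subgroup.zpowers (shift (k * d) τ)}
      have e0 : rho0 d n hd0 u hu x * shift (kk * d) τ * (rho0 d n hd0 u hu x)⁻¹
          = shift (ext0 n x kk * d) τ := by
        rw [hconj x kk hkk]
        group
      have e1 := map_zpow (MulAut.conj (rho0 d n hd0 u hu x)) (shift (kk * d) τ) z
      simp only [MulAut.conj_apply] at e1
      rw [e1, e0]
      exact Subgroup.subset_closure
        ⟨ext0 n x kk, ext0_lt x hkk, Subgroup.mem_zpowers_iff.mpr ⟨z, rfl⟩⟩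
    · show rho0 d n hd0 u hu x * 1 * (rho0 d n hd0 u hu x)⁻¹ ∈
        Subgroup.closure {x | ∃ k < n, x ∈ Subgroup.zpowers (shift (k * d) τ)}
      rw [mul_one, mul_inv_cancel]
      exact one_mem _
    · intro a b _ _ ha hb
      show rho0 d n hd0 u hu x * (a * b) * (rho0 d n hd0 u hu x)⁻¹ ∈
        Subgroup.closure {x | ∃ k < n, x ∈ Subgroup.zpowers (shift (k * d) τ)}
      have e : rho0 d n hd0 u hu x * (a * b) * (rho0 d n hd0 u hu x)⁻¹
          = (rho0 d n hd0 u hu x * a * (rho0 d n hd0 u hu x)⁻¹)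
            * (rho0 d n hd0 u hu x * b * (rho0 d n hd0 u hu x)⁻¹) := by group
      rw [e]
      exact mul_mem ha hb
    · intro a _ ha
      show rho0 d n hd0 u hu x * a⁻¹ * (rho0 d n hd0 u hu x)⁻¹ ∈
        Subgroup.closure {x | ∃ k < n, x ∈ Subgroup.zpowers (shift (k * d) τ)}
      have e : rho0 d n hd0 u hu x * a⁻¹ * (rho0 d n hd0 u hu x)⁻¹
          = (rho0 d n hd0 u hu x * a * (rho0 d n hd0 u hu x)⁻¹)⁻¹ := by group
      rw [e]
      exact inv_mem ha
  have hρnorm : ∀ x, rho0 d n hd0 u hu x ∈ Subgroup.normalizer (T : Set (Equiv.Perm ℕ)) := by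
    intro x
    rw [Subgroup.mem_normalizer_iff]
    intro h
    constructor
    · exact fun hh => hconjT x h hh
    · intro hh
      have h3 := hconjT x⁻¹ _ hh
      rw [map_inv] at h3
      have e : (rho0 d n hd0 u hu x)⁻¹ * (rho0 d n hd0 u hu x * h * (rho0 d n hd0 u hu x)⁻¹)
          * ((rho0 d n hd0 u hu x)⁻¹)⁻¹ = h := by group
      rwa [e] at h3
  have hshiftwT : ∀ (s' : ℕ), s' + 1 ≤ n - 1 → shift (s' * d) w ∈ T := by
    intro s' hs'
    rw [hw_def, shift_mul, shift_shift, hT]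
    refine mul_mem (Subgroup.subset_closure ⟨s', by omega, ?_⟩)
      (Subgroup.subset_closure ⟨s' + 1, by omega, ?_⟩)
    · exact Subgroup.mem_zpowers_iff.mpr ⟨(k₀ : ℤ), by rw [← shift_zpow, zpow_natCast]⟩
    · rw [show s' * d + d = (s' + 1) * d from by rw [Nat.add_mul, one_mul]]
      exact Subgroup.mem_zpowers_iff.mpr ⟨(k₀ : ℤ), by rw [← shift_zpow, zpow_natCast]⟩
  have hnormB : ∀ g ∈ B, ∀ t ∈ T, g * t * g⁻¹ ∈ T := by
    have hBle : B ≤ Subgroup.normalizer (T : Set (Equiv.Perm ℕ)) := by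
      rw [hB, Subgroup.closure_le]
      rintro x ⟨s, hs1, hs2, rfl⟩
      obtain ⟨s', rfl⟩ : ∃ s', s = s' + 1 := ⟨s - 1, by omega⟩
      show σs (s' + 1) ∈ Subgroup.normalizer (T : Set (Equiv.Perm ℕ))
      have e : σs (s' + 1) = rho0 d n hd0 u hu
          (Equiv.swap (⟨s', by omega⟩ : Fin n) (⟨s' + 1, by omega⟩ : Fin n))
            * (shift (s' * d) w)⁻¹ := by
        rw [hρswapL7 s' (by omega)]
        group
      rw [e]
      exact mul_mem (hρnorm _) (inv_mem (Subgroup.le_normalizer (hshiftwT s' (by omega))))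
    intro g hg t ht
    exact (Subgroup.mem_normalizer_iff.mp (hBle hg) t).mp ht
  -- Φ kills T
  have hTker : ∀ (g : Equiv.Perm ℕ), g ∈ T → ∀ (hP : g ∈ Pgrp d n hd0),
      Phi d n hd0 ⟨g, hP⟩ = 1 := by
    have hTmem : ∀ {a : Equiv.Perm ℕ},
        a ∈ Subgroup.closure {x | ∃ k < n, x ∈ Subgroup.zpowers (shift (k * d) τ)} →
          a ∈ T := fun h => by rw [hT]; exact h
    intro g hg
    rw [hT] at hg
    refine Subgroup.closure_induction
      (p := fun g _ => ∀ hP : g ∈ Pgrp d n hd0, Phi d n hd0 ⟨g, hP⟩ = 1) ?_ ?_ ?_ ?_ hg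
    · rintro x ⟨kk, hkk, hx⟩ hP
      obtain ⟨z, rfl⟩ := Subgroup.mem_zpowers_iff.mp hx
      refine Phi_eq_one_of hd0 _ ?_
      intro y
      show ((shift (kk * d) τ) ^ z) y / d = y / d
      rw [← shift_zpow]
      exact hsblk kk _ (zpow_mem hτF z) y
    · intro hP
      rw [show (⟨1, hP⟩ : ↥(Pgrp d n hd0)) = 1 from rfl, map_one]
    · intro a b ha hb iha ihb hP
      have haP : a ∈ Pgrp d n hd0 := hTP (hTmem ha)
      have hbP : b ∈ Pgrp d n hd0 := hTP (hTmem hb)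
      rw [show (⟨a * b, hP⟩ : ↥(Pgrp d n hd0)) = ⟨a, haP⟩ * ⟨b, hbP⟩ from rfl, map_mul,
        iha haP, ihb hbP, mul_one]
    · intro a ha iha hP
      have haP : a ∈ Pgrp d n hd0 := hTP (hTmem ha)
      rw [show (⟨a⁻¹, hP⟩ : ↥(Pgrp d n hd0)) = (⟨a, haP⟩)⁻¹ from rfl, map_inv, iha haP,
        inv_one]
  -- elements of B differ from a section element by something in T
  have hclaimB : ∀ (g : Equiv.Perm ℕ), g ∈ B → ∀ (hP : g ∈ Pgrp d n hd0),
      g * (rho0 d n hd0 u hu (Phi d n hd0 ⟨g, hP⟩))⁻¹ ∈ T := by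
    have hBmem : ∀ {a : Equiv.Perm ℕ},
        a ∈ Subgroup.closure {x | ∃ s, 1 ≤ s ∧ s ≤ n - 1 ∧ x = σs s} → a ∈ B :=
      fun h => by rw [hB]; exact h
    intro g hg
    rw [hB] at hg
    refine Subgroup.closure_induction
      (p := fun g _ => ∀ hP : g ∈ Pgrp d n hd0,
        g * (rho0 d n hd0 u hu (Phi d n hd0 ⟨g, hP⟩))⁻¹ ∈ T) ?_ ?_ ?_ ?_ hg
    · rintro x ⟨s, hs1, hs2, rfl⟩ hP
      obtain ⟨s', rfl⟩ : ∃ s', s = s' + 1 := ⟨s - 1, by omega⟩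
      rw [hΦσs s' (by omega) hP, hρswap_pow s' (by omega)]
      have e : σs (s' + 1) * ((σs (s' + 1)) ^ q)⁻¹ = ((σs (s' + 1)) ^ (2 * k₀))⁻¹ := by
        rw [hk₀, pow_succ, mul_inv_rev, mul_inv_cancel_left]
      rw [e, hpow2k s']
      exact inv_mem (hshiftwT s' (by omega))
    · intro hP
      rw [show (⟨1, hP⟩ : ↥(Pgrp d n hd0)) = 1 from rfl, map_one, map_one, inv_one, mul_one]
      exact one_mem T
    · intro a b ha hb iha ihb hP
      have haB : a ∈ B := hBmem ha
      have hbB : b ∈ B := hBmem hb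
      have haP : a ∈ Pgrp d n hd0 := hBP haB
      have hbP : b ∈ Pgrp d n hd0 := hBP hbB
      rw [show (⟨a * b, hP⟩ : ↥(Pgrp d n hd0)) = ⟨a, haP⟩ * ⟨b, hbP⟩ from rfl, map_mul,
        map_mul]
      have e : a * b * (rho0 d n hd0 u hu (Phi d n hd0 ⟨a, haP⟩)
            * rho0 d n hd0 u hu (Phi d n hd0 ⟨b, hbP⟩))⁻¹
          = (a * (b * (rho0 d n hd0 u hu (Phi d n hd0 ⟨b, hbP⟩))⁻¹) * a⁻¹)
            * (a * (rho0 d n hd0 u hu (Phi d n hd0 ⟨a, haP⟩))⁻¹) := by group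
      rw [e]
      exact mul_mem (hnormB a haB _ (ihb hbP)) (iha haP)
    · intro a ha iha hP
      have haB : a ∈ B := hBmem ha
      have haP : a ∈ Pgrp d n hd0 := hBP haB
      rw [show (⟨a⁻¹, hP⟩ : ↥(Pgrp d n hd0)) = (⟨a, haP⟩)⁻¹ from rfl, map_inv, map_inv]
      have e : a⁻¹ * ((rho0 d n hd0 u hu (Phi d n hd0 ⟨a, haP⟩))⁻¹)⁻¹
          = a⁻¹ * (a * (rho0 d n hd0 u hu (Phi d n hd0 ⟨a, haP⟩))⁻¹)⁻¹ * (a⁻¹)⁻¹ := by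
        group
      rw [e]
      exact hnormB a⁻¹ (inv_mem haB) _ (inv_mem (iha haP))
  -- the kernel is A
  have hker : φ.ker = A.subgroupOf B := by
    ext b
    rw [MonoidHom.mem_ker, Subgroup.mem_subgroupOf, hA]
    constructor
    · intro hb
      refine ⟨b.2, ?_⟩
      have h3 := hclaimB (b : Equiv.Perm ℕ) b.2 (hBP b.2)
      rw [show Phi d n hd0 ⟨(b : Equiv.Perm ℕ), hBP b.2⟩ = φ b from rfl, hb, map_one,
        inv_one, mul_one] at h3
      exact h3
    · rintro ⟨hbB, hbT⟩
      have h3 := hTker (b : Equiv.Perm ℕ) hbT (hBP b.2)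
      exact h3
  refine ⟨φ, hsurj, hker, fun s h1 h2 hmem => hφσs s h1 h2 hmem, ρ, hcomp,
    (k₀ : ℤ), (k₀ : ℤ), ⟨1, by rw [hk₀]; push_cast; ring⟩, ?_⟩
  intro s h1 h2
  obtain ⟨s', rfl⟩ : ∃ s', s = s' + 1 := ⟨s - 1, by omega⟩
  simp only [Nat.add_sub_cancel]
  show rho0 d n hd0 u hu _ = _
  rw [hρswapL7 s' (by omega), hw_def]
  simp only [zpow_natCast]
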